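/- arXiv:1210.7528 — 2 statements merged into one kernel-verified Lean document; each statement's English description precedes it below -/
import Mathlib

section
/- Let η(x) = 3/4 + (3/2)c + x/2 - (√3/4)·√((1 - 2c - 2x)(3 + 2c + 2x)) where c = -1/2 + 11/(10√6). Then x* = -√(29/2)/10 satisfies η(x*) = x*; i.e., x* is a fixed point of the first return map η of Case 13₂ with parameters α = -1, β = 1/2, λ = -1/2 + 11√6/60. -/
/-- The first return map η of Case 13₂ (α = -1, β = 1/2, λ = -1/2 + 11√6/60)
has fixed point x* = -√(29/2)/10. -/
theorem stmt10 :
    let c : ℝ := -1/2 + 11 / (10 * Real.sqrt 6)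
    let η : ℝ → ℝ := fun x => 3/4 + (3/2) * c + x/2 -
      (Real.sqrt 3 / 4) * Real.sqrt ((1 - 2*c - 2*x) * (3 + 2*c + 2*x))
    η (-(Real.sqrt (29/2)) / 10) = -(Real.sqrt (29/2)) / 10 := by
  intro c η
  set s : ℝ := Real.sqrt 6 with hs_def
  set t : ℝ := Real.sqrt (29/2) with ht_def
  have hs2 : s ^ 2 = 6 := Real.sq_sqrt (by norm_num)
  have ht2 : t ^ 2 = 29/2 := Real.sq_sqrt (by norm_num)
  have hspos : (0:ℝ) < s := Real.sqrt_pos.mpr (by norm_num)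
  have htpos : (0:ℝ) < t := Real.sqrt_pos.mpr (by norm_num)
  set x : ℝ := -t / 10 with hx_def
  have hc : c = -1/2 + 11 * s / 60 := by
    show -1/2 + 11 / (10 * s) = -1/2 + 11 * s / 60
    have hne : s ≠ 0 := ne_of_gt hspos
    field_simp
    nlinarith [hs2]
  have hkey : 3 * ((1 - 2*c - 2*x) * (3 + 2*c + 2*x)) = (3 + 6*c - 2*x)^2 := by
    rw [hc, hx_def]
    linear_combination (-(121/75)) * hs2 + (-(4/25)) * ht2
  have hrhs : 0 ≤ 3 + 6*c - 2*x := by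
    rw [hc, hx_def]
    nlinarith [hspos, htpos]
  have hsqrt : Real.sqrt 3 * Real.sqrt ((1 - 2*c - 2*x) * (3 + 2*c + 2*x))
      = 3 + 6*c - 2*x := by
    rw [← Real.sqrt_mul (by norm_num), hkey, Real.sqrt_sq hrhs]
  show 3/4 + (3/2) * c + x/2 -
      (Real.sqrt 3 / 4) * Real.sqrt ((1 - 2*c - 2*x) * (3 + 2*c + 2*x)) = x
  have h4 : (Real.sqrt 3 / 4) * Real.sqrt ((1 - 2*c - 2*x) * (3 + 2*c + 2*x))
      = (3 + 6*c - 2*x) / 4 := by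
    rw [← hsqrt]; ring
  rw [h4]; ring
end

section
/- For β ∈ (0, √3/2), the three values L₀, L₁, L₂ defined by L₀ = [-9 - 6β + √(9-12β²) + √2·√(15 + √(9-12β²) - 2β(-3 + 2β + √(9-12β²)))]/12, L₁ = -1/2 + √(9-12β²)/6, L₂ = [-9 + 6β + √(9-12β²) + √2·√(15 + √(9-12β²) + 2β(-3 + 2β + √(9-12β²)))]/12 satisfy L₀ < L₁ < L₂. -/
/-- For β ∈ (0, √3/2) the critical values L₀, L₁, L₂ satisfy L₀ < L₁ < L₂. -/
theorem stmt16 (β : ℝ) (hβ : β ∈ Set.Ioo (0 : ℝ) (Real.sqrt 3 / 2)) :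
    let r : ℝ := Real.sqrt (9 - 12 * β^2)
    let L₀ : ℝ := (-9 - 6*β + r +
      Real.sqrt 2 * Real.sqrt (15 + r - 2*β*(-3 + 2*β + r))) / 12
    let L₁ : ℝ := -1/2 + r / 6
    let L₂ : ℝ := (-9 + 6*β + r +
      Real.sqrt 2 * Real.sqrt (15 + r + 2*β*(-3 + 2*β + r))) / 12
    L₀ < L₁ ∧ L₁ < L₂ := by
  obtain ⟨hβ0, hβ1⟩ := hβ
  intro r L₀ L₁ L₂
  have h3 : Real.sqrt 3 ^ 2 = 3 := Real.sq_sqrt (by norm_num)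
  have h3n : (0:ℝ) ≤ Real.sqrt 3 := Real.sqrt_nonneg 3
  have hβ2 : β ^ 2 < 3 / 4 := by nlinarith
  have hr2 : r ^ 2 = 9 - 12 * β ^ 2 := Real.sq_sqrt (by nlinarith)
  have hrpos : 0 < r := Real.sqrt_pos.mpr (by nlinarith)
  have hrle : r ≤ 3 := by nlinarith
  have hβlt : β < 7/8 := by nlinarith
  -- key inequality 1 : (1+4β) r > 3 - 6β - 8β²
  have key1 : 3 - 6 * β - 8 * β ^ 2 < (1 + 4 * β) * r := by
    rcases le_or_gt (3/4 : ℝ) β with h | h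
    · nlinarith [mul_pos (show (0:ℝ) < 1 + 4 * β by linarith) hrpos]
    · have hsq : (3 - 6 * β - 8 * β ^ 2) ^ 2 < ((1 + 4 * β) * r) ^ 2 := by
        nlinarith [mul_pos hβ0 (mul_pos (show (0:ℝ) < 3 - 4*β by linarith)
          (sq_nonneg (4*β+3) |>.lt_of_ne (by nlinarith)))]
      nlinarith [mul_pos (show (0:ℝ) < 1 + 4 * β by linarith) hrpos]
  -- key inequality 2 : (4β-1) r > 4β² - 6β - 3
  have key2 : 4 * β ^ 2 - 6 * β - 3 < (4 * β - 1) * r := by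
    rcases le_or_gt (1/4 : ℝ) β with h | h
    · nlinarith [mul_nonneg (show (0:ℝ) ≤ 4 * β - 1 by linarith) hrpos.le]
    · have hsq : ((4 * β - 1) * r) ^ 2 < (3 + 6 * β - 4 * β ^ 2) ^ 2 := by
        nlinarith
      nlinarith [mul_pos (show (0:ℝ) < 1 - 4 * β by linarith) hrpos]
  constructor
  · show (-9 - 6*β + r +
      Real.sqrt 2 * Real.sqrt (15 + r - 2*β*(-3 + 2*β + r))) / 12 < -1/2 + r / 6
    have hS : Real.sqrt 2 * Real.sqrt (15 + r - 2*β*(-3 + 2*β + r))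
        = Real.sqrt (2 * (15 + r - 2*β*(-3 + 2*β + r))) :=
      (Real.sqrt_mul (by norm_num) _).symm
    have hlt : Real.sqrt (2 * (15 + r - 2*β*(-3 + 2*β + r))) < 3 + 6*β + r := by
      rw [show Real.sqrt (2 * (15 + r - 2*β*(-3 + 2*β + r))) < 3 + 6*β + r ↔
        2 * (15 + r - 2*β*(-3 + 2*β + r)) < (3 + 6*β + r) ^ 2 from
        Real.sqrt_lt' (by linarith)]
      nlinarith [key1]
    rw [hS]
    linarith
  · show -1/2 + r / 6 < (-9 + 6*β + r +
      Real.sqrt 2 * Real.sqrt (15 + r + 2*β*(-3 + 2*β + r))) / 12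
    have hS : Real.sqrt 2 * Real.sqrt (15 + r + 2*β*(-3 + 2*β + r))
        = Real.sqrt (2 * (15 + r + 2*β*(-3 + 2*β + r))) :=
      (Real.sqrt_mul (by norm_num) _).symm
    have hlt : 3 - 6*β + r < Real.sqrt (2 * (15 + r + 2*β*(-3 + 2*β + r))) := by
      rcases le_or_gt (3 - 6*β + r) 0 with h | h
      · have hpos : 0 < 2 * (15 + r + 2*β*(-3 + 2*β + r)) := by nlinarith
        have := Real.sqrt_pos.mpr hpos
        linarith
      · rw [show (3 - 6*β + r < Real.sqrt (2 * (15 + r + 2*β*(-3 + 2*β + r)))) ↔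
          (3 - 6*β + r) ^ 2 < 2 * (15 + r + 2*β*(-3 + 2*β + r)) from
          Real.lt_sqrt h.le]
        nlinarith [key2]
    rw [hS]
    linarith
end
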